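/- Let G be a TSI Polish group with compatible two-sided invariant metric d, and let x,y ∈ G^ω. If the sequence (x(0)···x(n)·y(n)^{-1}···y(0)^{-1})_n converges in G, then lim_n d(x(n),y(n)) = 0. -/

import Mathlib

open Filter Topology

/-- The partial product `x(0) ⋯ x(n)`. -/
def partialProd {G : Type*} [Monoid G] (x : ℕ → G) (n : ℕ) : G :=
  ((List.range (n + 1)).map x).prod

lemma partialProd_succ {G : Type*} [Monoid G] (x : ℕ → G) (n : ℕ) :
    partialProd x (n + 1) = partialProd x n * x (n + 1) := by
  simp [partialProd, List.range_succ, mul_assoc]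

/-- For a TSI Polish group `G` with compatible two-sided invariant metric `d` and
`x, y ∈ G^ω`, if `(x(0)⋯x(n)·y(n)⁻¹⋯y(0)⁻¹)_n` converges in `G`, then
`d(x(n), y(n)) → 0`. -/
theorem stmt_3 (G : Type*) [Group G] [MetricSpace G] [IsTopologicalGroup G]
    [PolishSpace G]
    (hleft : ∀ g h k : G, dist (g * h) (g * k) = dist h k)
    (hright : ∀ g h k : G, dist (h * g) (k * g) = dist h k)
    (x y : ℕ → G)
    (h : ∃ l : G, Tendsto (fun n => partialProd x n * (partialProd y n)⁻¹) atTop (𝓝 l)) :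
    Tendsto (fun n => dist (x n) (y n)) atTop (𝓝 0) := by
  obtain ⟨l, hl⟩ := h
  set z : ℕ → G := fun n => partialProd x n * (partialProd y n)⁻¹ with hz
  have key : ∀ n, dist (x (n + 1)) (y (n + 1)) = dist (z (n + 1)) (z n) := by
    intro n
    have h1 : dist (x (n + 1)) (y (n + 1))
        = dist (partialProd x n * x (n + 1)) (partialProd x n * y (n + 1)) :=
      (hleft _ _ _).symm
    have h2 : dist (partialProd x n * x (n + 1)) (partialProd x n * y (n + 1))
        = dist (partialProd x n * x (n + 1) * (partialProd y (n + 1))⁻¹)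
            (partialProd x n * y (n + 1) * (partialProd y (n + 1))⁻¹) :=
      (hright _ _ _).symm
    have h3 : partialProd x n * y (n + 1) * (partialProd y (n + 1))⁻¹ = z n := by
      simp [hz, partialProd_succ, mul_assoc]
    rw [h1, h2, h3, hz]
    simp [partialProd_succ]
  have hd : Tendsto (fun n => dist (z (n + 1)) (z n)) atTop (𝓝 0) := by
    have := (hl.comp (tendsto_add_atTop_nat 1)).dist hl
    simpa using this
  have : Tendsto (fun n => dist (x (n + 1)) (y (n + 1))) atTop (𝓝 0) := by
    simpa [key] using hd
  exact (tendsto_add_atTop_iff_nat 1).mp this
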